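/- A finite-dimensional normed vector space V over a complete discretely valued non-archimedean field F admits an orthonormal basis if and only if ||V|| ⊆ |F|. -/

import Mathlib

open Filter

private lemma rsup_le_of {n : ℕ} {f : Fin n → ℝ} {a : ℝ} (ha : 0 ≤ a) (h : ∀ i, f i ≤ a) :
    (⨆ i, f i) ≤ a := by
  rcases isEmpty_or_nonempty (Fin n) with hι | hι
  · rw [Real.iSup_of_isEmpty]; exact ha
  · exact ciSup_le h

private lemma rsup_lt_of {n : ℕ} {f : Fin n → ℝ} {a : ℝ} (ha : 0 < a) (h : ∀ i, f i < a) :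
    (⨆ i, f i) < a := by
  rcases isEmpty_or_nonempty (Fin n) with hι | hι
  · rw [Real.iSup_of_isEmpty]; exact ha
  · obtain ⟨i, hi⟩ := Finite.exists_max f
    exact lt_of_le_of_lt (ciSup_le fun j => hi j) (h i)

private lemma rsup_succ {n : ℕ} (f : Fin (n + 1) → ℝ) (hf : ∀ i, 0 ≤ f i) :
    (⨆ i, f i) = max (⨆ i : Fin n, f i.castSucc) (f (Fin.last n)) := by
  apply le_antisymm
  · refine ciSup_le fun i => ?_
    induction i using Fin.lastCases with
    | last => exact le_max_right _ _
    | cast j => exact le_trans (le_ciSup (Finite.bddAbove_range fun j : Fin n => f j.castSucc) j) (le_max_left _ _)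
  · refine max_le ?_ (le_ciSup (Finite.bddAbove_range f) (Fin.last n))
    exact rsup_le_of (le_trans (hf _) (le_ciSup (Finite.bddAbove_range f) (Fin.last n)))
      fun j => le_ciSup (Finite.bddAbove_range f) j.castSucc

private lemma zpow_anti_of {σ : ℝ} (h0 : 0 < σ) (h1 : σ < 1) {l m : ℤ} (h : l ≤ m) :
    σ ^ m ≤ σ ^ l := by
  rcases eq_or_lt_of_le h with rfl | h
  · rfl
  · exact (zpow_lt_zpow_right_of_lt_one₀ h0 h1 h).le

private lemma aux_basis {F : Type u} [Field F] (v : AbsoluteValue F ℝ)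
    (σ : ℝ) (hσ0 : 0 < σ) (hσ1 : σ < 1)
    (hdisc : ∀ x : F, x ≠ 0 → ∃ n : ℤ, v x = σ ^ n)
    (hcomplete : ∀ a : ℕ → F,
      (∀ ε : ℝ, 0 < ε → ∃ n₀ : ℕ, ∀ m n : ℕ, n₀ ≤ m → n₀ ≤ n → v (a m - a n) < ε) →
      ∃ L : F, Tendsto (fun n => v (a n - L)) atTop (nhds 0)) :
    ∀ (n : ℕ) (V : Type w) [AddCommGroup V] [Module F V] [FiniteDimensional F V]
      (N : V → ℝ), (∀ x : V, N x = 0 ↔ x = 0) → (∀ (c : F) (x : V), N (c • x) = v c * N x) →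
      (∀ x y : V, N (x + y) ≤ max (N x) (N y)) → Module.finrank F V = n →
      (∀ x : V, ∃ c : F, N x = v c) →
      ∃ b : Module.Basis (Fin n) F V,
        (∀ lam : Fin n → F, N (∑ i, lam i • b i) = ⨆ i, v (lam i)) ∧ ∀ i, N (b i) = 1 := by
  intro n
  induction n with
  | zero =>
    intro V _ _ _ N hN0 _ _ hrank _
    have : Subsingleton V := Module.finrank_zero_iff.mp hrank
    refine ⟨Module.Basis.empty _, fun lam => ?_, fun i => i.elim0⟩
    rw [show (∑ i, lam i • (Module.Basis.empty V : Module.Basis (Fin 0) F V) i) = (0 : V) by simp,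
      (hN0 0).mpr rfl, Real.iSup_of_isEmpty]
  | succ n IH =>
    intro V _ _ _ N hN0 hNsmul hNadd hrank hval
    -- basic facts about N
    have hNneg : ∀ x : V, N (-x) = N x := fun x => by
      rw [show -x = (-1 : F) • x by simp, hNsmul, show v (-1) = 1 by
        rw [v.map_neg, v.map_one], one_mul]
    have hNnn : ∀ x : V, 0 ≤ N x := fun x => by
      have h := hNadd x (-x)
      rwa [add_neg_cancel, (hN0 0).mpr rfl, hNneg, max_self] at h
    have hNsub : ∀ x y : V, N (x - y) ≤ max (N x) (N y) := fun x y => by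
      rw [sub_eq_add_neg]
      simpa [hNneg] using hNadd x (-y)
    -- the basis, hyperplane W, extra vector u
    set b0 : Module.Basis (Fin (n + 1)) F V := (Module.finBasis F V).reindex (finCongr hrank) with hb0
    set u : V := b0 (Fin.last n) with hu_def
    set f : Fin n → V := fun i => b0 i.castSucc with hf_def
    have hfli : LinearIndependent F f := b0.linearIndependent.comp _ (Fin.castSucc_injective n)
    set W : Submodule F V := Submodule.span F (Set.range f) with hW_def
    have hfmem : ∀ i, f i ∈ W := fun i => Submodule.subset_span ⟨i, rfl⟩
    have hu : u ∉ W := by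
      intro hmem
      obtain ⟨cvec, hcv⟩ := (Submodule.mem_span_range_iff_exists_fun F).mp hmem
      have h2 := congrArg (fun z => b0.repr z (Fin.last n)) hcv
      simp only [hu_def, hf_def, map_sum, map_smul, Module.Basis.repr_self, Finsupp.finset_sum_apply,
        Finsupp.smul_apply, Finsupp.single_apply, smul_eq_mul] at h2
      rw [Finset.sum_eq_zero] at h2
      · simp at h2
      · intro i _
        rw [if_neg (Fin.castSucc_lt_last i).ne, mul_zero]
    have hdecomp : ∀ x : V, ∃ (w : W) (μ : F), x = ↑w + μ • u := by
      intro x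
      refine ⟨∑ i, b0.repr x i.castSucc • ⟨f i, hfmem i⟩, b0.repr x (Fin.last n), ?_⟩
      have hcoe : ((∑ i, b0.repr x i.castSucc • (⟨f i, hfmem i⟩ : W) : W) : V)
          = ∑ i, b0.repr x i.castSucc • f i := by push_cast; rfl
      rw [hcoe]
      conv_lhs => rw [← b0.sum_repr x]
      rw [Fin.sum_univ_castSucc]
    -- apply the induction hypothesis to W
    obtain ⟨e, he1, he2⟩ := IH ↥W (fun w => N ↑w)
      (fun w => (hN0 ↑w).trans Submodule.coe_eq_zero)
      (fun c w => hNsmul c ↑w)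
      (fun x y => hNadd ↑x ↑y)
      (by rw [hW_def, finrank_span_eq_card hfli]; simp)
      (fun w => hval ↑w)
    have hrepr : ∀ x : W, N ↑x = ⨆ i, v (e.repr x i) := by
      intro x
      conv_lhs => rw [← e.sum_repr x]
      exact he1 _
    -- the distance set
    set S : Set ℝ := Set.range (fun w : W => N (u - ↑w)) with hS_def
    have hSne : S.Nonempty := ⟨_, ⟨0, rfl⟩⟩
    have hSbdd : BddBelow S := ⟨0, by rintro s ⟨w, rfl⟩; exact hNnn _⟩
    have hSpos : ∀ w : W, 0 < N (u - ↑w) := by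
      intro w
      rcases (hNnn (u - ↑w)).lt_or_eq with h | h
      · exact h
      · exfalso
        have : u - ↑w = 0 := (hN0 _).mp h.symm
        exact hu (by rw [sub_eq_zero] at this; rw [this]; exact w.2)
    set d : ℝ := sInf S with hd_def
    have hdlb : ∀ w : W, d ≤ N (u - ↑w) := fun w => csInf_le hSbdd ⟨w, rfl⟩
    have hd0 : 0 ≤ d := le_csInf hSne (by rintro s ⟨w, rfl⟩; exact hNnn _)
    -- completeness: the distance is positive
    have hdpos : 0 < d := by
      rcases hd0.lt_or_eq with h | h
      · exact h
      exfalso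
      have hseq : ∀ k : ℕ, ∃ w : W, N (u - ↑w) < σ ^ k := by
        intro k
        have hlt : d < σ ^ k := by rw [← h]; positivity
        obtain ⟨s, ⟨w, rfl⟩, hs⟩ := exists_lt_of_csInf_lt hSne hlt
        exact ⟨w, hs⟩
      choose w hw using hseq
      set a : Fin n → ℕ → F := fun i k => e.repr (w k) i with ha_def
      have hWdist : ∀ m k : ℕ, ∀ i, v (a i m - a i k) ≤ N (↑(w m) - ↑(w k)) := by
        intro m k i
        have h1 : (↑(w m) - ↑(w k) : V) = ↑(w m - w k) := by norm_cast
        rw [h1, hrepr (w m - w k)]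
        have h2 : e.repr (w m - w k) i = a i m - a i k := by simp [ha_def]
        rw [← h2]
        exact le_ciSup (Finite.bddAbove_range fun j => v (e.repr (w m - w k) j)) i
      have hcau : ∀ i, ∃ L, Tendsto (fun k => v (a i k - L)) atTop (nhds 0) := by
        intro i
        apply hcomplete
        intro ε hε
        obtain ⟨k₀, hk₀⟩ := exists_pow_lt_of_lt_one hε hσ1
        refine ⟨k₀, fun m k hm hk => ?_⟩
        calc v (a i m - a i k) ≤ N (↑(w m) - ↑(w k)) := hWdist m k i
          _ ≤ max (N (u - ↑(w k))) (N (u - ↑(w m))) := by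
              have h3 : (↑(w m) - ↑(w k) : V) = (u - ↑(w k)) - (u - ↑(w m)) := by abel
              rw [h3]; exact hNsub _ _
          _ < σ ^ k₀ :=
              max_lt (lt_of_lt_of_le (hw k) (pow_le_pow_of_le_one hσ0.le hσ1.le hk))
                (lt_of_lt_of_le (hw m) (pow_le_pow_of_le_one hσ0.le hσ1.le hm))
          _ < ε := hk₀
      choose L hL using hcau
      set winf : W := ∑ i, L i • e i with hwinf
      have hreprinf : ∀ i, e.repr winf i = L i := by
        intro i; simp [hwinf, Finsupp.single_apply]
      have hdist2 : ∀ k, N (↑(w k) - ↑winf) = ⨆ i, v (a i k - L i) := by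
        intro k
        have h1 : (↑(w k) - ↑winf : V) = ↑(w k - winf) := by norm_cast
        rw [h1, hrepr]
        congr 1
        funext i
        rw [map_sub, Finsupp.sub_apply, hreprinf]
      have hzero : N (u - ↑winf) = 0 := by
        by_contra hne
        have hpos : 0 < N (u - ↑winf) := (hNnn _).lt_of_ne (Ne.symm hne)
        obtain ⟨k₀, hk₀⟩ := exists_pow_lt_of_lt_one hpos hσ1
        have hki : ∀ i, ∃ ki, ∀ k ≥ ki, v (a i k - L i) < N (u - ↑winf) := by
          intro i
          exact eventually_atTop.mp ((hL i).eventually (gt_mem_nhds hpos))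
        choose ki hki' using hki
        obtain ⟨K, hK1, hK2⟩ : ∃ K, k₀ ≤ K ∧ ∀ i, ki i ≤ K :=
          ⟨max k₀ (Finset.univ.sup ki), le_max_left _ _,
            fun i => le_trans (Finset.le_sup (Finset.mem_univ i)) (le_max_right _ _)⟩
        have hb1 : N (u - ↑(w K)) < N (u - ↑winf) :=
          lt_of_lt_of_le (hw K)
            (le_trans (pow_le_pow_of_le_one hσ0.le hσ1.le hK1) hk₀.le)
        have hb2 : N (↑(w K) - ↑winf) < N (u - ↑winf) := by
          rw [hdist2]
          exact rsup_lt_of hpos (fun i => hki' i K (hK2 i))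
        have hcontr : N (u - ↑winf) < N (u - ↑winf) := by
          have hsplit : u - ↑winf = (u - ↑(w K)) + (↑(w K) - ↑winf) := by abel
          calc N (u - ↑winf) = N ((u - ↑(w K)) + (↑(w K) - ↑winf)) := by rw [← hsplit]
            _ ≤ max (N (u - ↑(w K))) (N (↑(w K) - ↑winf)) := hNadd _ _
            _ < N (u - ↑winf) := max_lt hb1 hb2
        exact lt_irrefl _ hcontr
      exact (hSpos winf).ne' hzero
    -- the minimum distance is attained
    obtain ⟨w₀, hmin⟩ : ∃ w₀ : W, ∀ w : W, N (u - ↑w₀) ≤ N (u - ↑w) := by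
      have hlt : d < d / σ := by
        rw [lt_div_iff₀ hσ0]; nlinarith
      obtain ⟨s, ⟨w₀, rfl⟩, hs⟩ := exists_lt_of_csInf_lt hSne hlt
      refine ⟨w₀, fun w => ?_⟩
      obtain ⟨c1, hc1⟩ := hval (u - ↑w₀)
      obtain ⟨c2, hc2⟩ := hval (u - ↑w)
      have h1 : c1 ≠ 0 := by
        intro h; rw [h, v.map_zero] at hc1; exact (hSpos w₀).ne' hc1
      have h2 : c2 ≠ 0 := by
        intro h; rw [h, v.map_zero] at hc2; exact (hSpos w).ne' hc2
      obtain ⟨m, hm⟩ := hdisc c1 h1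
      obtain ⟨l, hl⟩ := hdisc c2 h2
      have key : σ ^ (m + 1) < σ ^ l := by
        have h3 : σ * N (u - ↑w₀) < d := by rw [lt_div_iff₀ hσ0] at hs; linarith
        have h4 : d ≤ N (u - ↑w) := hdlb w
        rw [hc1, hm] at h3
        rw [hc2, hl] at h4
        calc σ ^ (m + 1) = σ * σ ^ m := by
              rw [zpow_add₀ hσ0.ne', zpow_one]; ring
          _ < d := h3
          _ ≤ σ ^ l := h4
      have hle : l ≤ m := by
        have := (zpow_lt_zpow_iff_right_of_lt_one₀ hσ0 hσ1).1 key
        omega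
      rw [hc1, hm, hc2, hl]
      exact zpow_anti_of hσ0 hσ1 hle
    -- scale to get the new orthonormal vector
    obtain ⟨c, hc⟩ := hval (u - ↑w₀)
    have hcne : c ≠ 0 := by
      intro h; rw [h, v.map_zero] at hc; exact (hSpos w₀).ne' hc
    have hvc : 0 < v c := v.pos hcne
    set e' : V := c⁻¹ • (u - ↑w₀) with he'_def
    have hNe' : N e' = 1 := by
      rw [he'_def, hNsmul, map_inv₀, hc, inv_mul_cancel₀ hvc.ne']
    have keyA : ∀ (x : W) (μ : F), v μ ≤ N (↑x + μ • e') := by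
      intro x μ
      rcases eq_or_ne μ 0 with rfl | hμ
      · simpa using hNnn ((↑x : V) + (0 : F) • e')
      · have hcoe2 : ((w₀ - (μ⁻¹ * c) • x : W) : V) = ↑w₀ - (μ⁻¹ * c) • ↑x := by
          push_cast; rfl
        have hrw : (↑x + μ • e' : V) = (μ * c⁻¹) • (u - ↑(w₀ - (μ⁻¹ * c) • x)) := by
          rw [hcoe2, he'_def]
          match_scalars <;> field_simp
        rw [hrw, hNsmul]
        calc v μ = v (μ * c⁻¹) * N (u - ↑w₀) := by
              rw [v.map_mul, map_inv₀, hc]; field_simp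
          _ ≤ v (μ * c⁻¹) * N (u - ↑(w₀ - (μ⁻¹ * c) • x)) :=
              mul_le_mul_of_nonneg_left (hmin _) (v.nonneg _)
    have keyB : ∀ (x : W) (μ : F), N (↑x + μ • e') = max (N ↑x) (v μ) := by
      intro x μ
      have hup : N (↑x + μ • e') ≤ max (N ↑x) (v μ) := by
        have h := hNadd ↑x (μ • e')
        rwa [hNsmul, hNe', mul_one] at h
      have hx : N ↑x ≤ N (↑x + μ • e') := by
        have h2 : N ↑x ≤ max (N (↑x + μ • e')) (v μ) := by
          calc N ↑x = N ((↑x + μ • e') - μ • e') := by rw [add_sub_cancel_right]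
            _ ≤ max (N (↑x + μ • e')) (N (μ • e')) := hNsub _ _
            _ = max (N (↑x + μ • e')) (v μ) := by rw [hNsmul, hNe', mul_one]
        exact le_trans h2 (max_le le_rfl (keyA x μ))
      exact le_antisymm hup (max_le hx (keyA x μ))
    -- the new family
    set g : Fin (n + 1) → V := Fin.snoc (fun i => ↑(e i)) e' with hg_def
    have hgcast : ∀ j : Fin n, g j.castSucc = ↑(e j) := by
      intro j; rw [hg_def]; simp
    have hglast : g (Fin.last n) = e' := by rw [hg_def]; simp
    have hgsum : ∀ lam : Fin (n + 1) → F, N (∑ i, lam i • g i) = ⨆ i, v (lam i) := by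
      intro lam
      have hcoe3 : ((∑ i, lam i.castSucc • e i : W) : V) = ∑ i, lam i.castSucc • (↑(e i) : V) := by
        push_cast; rfl
      have hsplit : ∑ i, lam i • g i
          = ↑(∑ i, lam i.castSucc • e i : W) + lam (Fin.last n) • e' := by
        rw [Fin.sum_univ_castSucc, hcoe3, hglast]
        congr 1
        exact Finset.sum_congr rfl fun i _ => by rw [hgcast]
      rw [hsplit, keyB, he1 (fun i => lam i.castSucc),
        rsup_succ (fun i => v (lam i)) (fun i => v.nonneg _)]
    have hg1 : ∀ i, N (g i) = 1 := by
      intro i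
      induction i using Fin.lastCases with
      | last => rw [hglast]; exact hNe'
      | cast j => rw [hgcast]; exact he2 j
    have hli : LinearIndependent F g := by
      rw [Fintype.linearIndependent_iff]
      intro lam hlam i
      have h0' : (⨆ i, v (lam i)) = 0 := by rw [← hgsum lam, hlam, (hN0 0).mpr rfl]
      have hle : v (lam i) ≤ 0 := h0' ▸ le_ciSup (Finite.bddAbove_range fun j => v (lam j)) i
      exact v.eq_zero.mp (le_antisymm hle (v.nonneg _))
    have hspan : ⊤ ≤ Submodule.span F (Set.range g) := by
      have hgW : ∀ w : W, (↑w : V) ∈ Submodule.span F (Set.range g) := by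
        intro ww
        have h1 : (↑ww : V) = ∑ i, e.repr ww i • g i.castSucc := by
          conv_lhs => rw [← e.sum_repr ww]
          push_cast
          exact Finset.sum_congr rfl fun i _ => by rw [hgcast]
        rw [h1]
        exact Submodule.sum_mem _ fun i _ =>
          Submodule.smul_mem _ _ (Submodule.subset_span ⟨_, rfl⟩)
      have hu' : u ∈ Submodule.span F (Set.range g) := by
        have h2 : u = c • e' + ↑w₀ := by
          rw [he'_def, smul_smul, mul_inv_cancel₀ hcne, one_smul, sub_add_cancel]
        rw [h2]
        exact Submodule.add_mem _
          (Submodule.smul_mem _ _ (Submodule.subset_span ⟨Fin.last n, hglast⟩)) (hgW w₀)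
      intro x _
      obtain ⟨w, μ, rfl⟩ := hdecomp x
      exact Submodule.add_mem _ (hgW w) (Submodule.smul_mem _ _ hu')
    refine ⟨Module.Basis.mk hli hspan, fun lam => ?_, fun i => ?_⟩
    · simp only [Module.Basis.coe_mk]
      exact hgsum lam
    · simp only [Module.Basis.coe_mk]
      exact hg1 i

/-- A finite-dimensional normed vector space admits an orthonormal basis iff all its norm values lie in `|F|`. -/
theorem stmt9 {F V : Type*} [Field F] [AddCommGroup V] [Module F V] [FiniteDimensional F V]
    (v : AbsoluteValue F ℝ) (hna : ∀ x y : F, v (x + y) ≤ max (v x) (v y))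
    (σ : ℝ) (hσ0 : 0 < σ) (hσ1 : σ < 1)
    (hdisc : ∀ x : F, x ≠ 0 → ∃ n : ℤ, v x = σ ^ n)
    (hcomplete : ∀ a : ℕ → F,
      (∀ ε : ℝ, 0 < ε → ∃ n₀ : ℕ, ∀ m n : ℕ, n₀ ≤ m → n₀ ≤ n → v (a m - a n) < ε) →
      ∃ L : F, Tendsto (fun n => v (a n - L)) atTop (nhds 0))
    (N : V → ℝ)
    (hN0 : ∀ x : V, N x = 0 ↔ x = 0)
    (hNsmul : ∀ (c : F) (x : V), N (c • x) = v c * N x)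
    (hNadd : ∀ x y : V, N (x + y) ≤ max (N x) (N y)) :
    (∃ b : Module.Basis (Fin (Module.finrank F V)) F V,
      (∀ lam : Fin (Module.finrank F V) → F, N (∑ i, lam i • b i) = ⨆ i, v (lam i)) ∧
      ∀ i, N (b i) = 1) ↔ ∀ x : V, ∃ c : F, N x = v c := by
  constructor
  · rintro ⟨b, hb1, -⟩ x
    rcases isEmpty_or_nonempty (Fin (Module.finrank F V)) with hι | hι
    · refine ⟨0, ?_⟩
      conv_lhs => rw [← b.sum_repr x]
      rw [hb1, Real.iSup_of_isEmpty, v.map_zero]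
    · obtain ⟨i, hi⟩ := Finite.exists_max fun i => v (b.repr x i)
      refine ⟨b.repr x i, ?_⟩
      conv_lhs => rw [← b.sum_repr x]
      rw [hb1]
      exact le_antisymm (ciSup_le hi) (le_ciSup (Finite.bddAbove_range fun j => v (b.repr x j)) i)
  · intro hval
    exact aux_basis v σ hσ0 hσ1 hdisc hcomplete (Module.finrank F V) V N hN0 hNsmul hNadd rfl hval
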